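/- Cardinality of the overlap classes with disjoint attribute sets (equation (37)). Fix a user i∈[n], an integer k≥3 and an integer α with 1≤α≤k, and assume m≥2k and n−1≥2k−α. Let Λ_{ii}^{(0,α)} denote the set of quadruples (S_1,S_2,T_1,T_2) such that: S_1,S_2∈G_{i,A} and T_1,T_2∈G_{i,B} for some disjoint k-sets A,B of attributes; every edge of S_1∪S_2∪T_1∪T_2 belongs to at least two of the four trees; it is not the case that simultaneously S_1=S_2, T_1=T_2 and the vertex sets of S_1 and T_1 intersect exactly in {i}; and the common intersection of the user–user edge sets of S_1,S_2,T_1,T_2 has exactly α edges. Then |Λ_{ii}^{(0,α)}| = C(m,k)·C(m−k,k)·C(n−1,α)·C(n−1−α,k−α)·C(n−1−k,k−α)·(k!)². -/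

import Mathlib

open Finset

/-- The set of attributes used by the tree encoded by `f` with root `i`: a tree of the
family `G_{i,A}` (the trees rooted at `i` made of `|A|` length-2 paths, pairwise disjoint
except at `i`, from `i` through a distinct user to a distinct attribute of `A`) is
faithfully encoded by the function `f` sending each attribute `a ∈ A` to the user (≠ `i`)
on the path from `i` to `a`, with the convention `f a = i` for `a ∉ A`. -/
def treeSupp {n m : ℕ} (i : Fin n) (f : Fin m → Fin n) : Finset (Fin m) :=
  Finset.univ.filter (fun a => f a ≠ i)

/-- `f` encodes a tree of the family `G_{i,A}`. -/
def IsPort {n m : ℕ} (i : Fin n) (A : Finset (Fin m)) (f : Fin m → Fin n) : Prop :=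
  treeSupp i f = A ∧ Set.InjOn f ↑(treeSupp i f)

/-- The user–user edges of the tree with root `i` encoded by `f`. -/
def userEdges {n m : ℕ} (i : Fin n) (f : Fin m → Fin n) : Finset (Sym2 (Fin n)) :=
  (treeSupp i f).image (fun a => s(i, f a))

/-- The user–attribute edges of the tree with root `i` encoded by `f`. -/
def attrEdges {n m : ℕ} (i : Fin n) (f : Fin m → Fin n) : Finset (Fin n × Fin m) :=
  (treeSupp i f).image (fun a => (f a, a))

/-- The port (non-root user) vertices of the tree with root `i` encoded by `f`. -/
def ports {n m : ℕ} (i : Fin n) (f : Fin m → Fin n) : Finset (Fin n) :=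
  (treeSupp i f).image f

/-- Every edge of the union graph `S₁ ∪ S₂ ∪ T₁ ∪ T₂` (where `S₁,T₁` are rooted at `i₁`
and `S₂,T₂` at `i₂`, with encodings `f₁,f₂,g₁,g₂`) belongs to at least two of the four
trees. -/
def CoveredTwice {n m : ℕ} (i1 i2 : Fin n) (f1 f2 g1 g2 : Fin m → Fin n) : Prop :=
  (∀ e ∈ userEdges i1 f1 ∪ userEdges i2 f2 ∪ userEdges i1 g1 ∪ userEdges i2 g2,
    2 ≤ (if e ∈ userEdges i1 f1 then 1 else 0) + (if e ∈ userEdges i2 f2 then 1 else 0)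
      + (if e ∈ userEdges i1 g1 then 1 else 0) + (if e ∈ userEdges i2 g2 then 1 else 0)) ∧
  (∀ p ∈ attrEdges i1 f1 ∪ attrEdges i2 f2 ∪ attrEdges i1 g1 ∪ attrEdges i2 g2,
    2 ≤ (if p ∈ attrEdges i1 f1 then 1 else 0) + (if p ∈ attrEdges i2 f2 then 1 else 0)
      + (if p ∈ attrEdges i1 g1 then 1 else 0) + (if p ∈ attrEdges i2 g2 then 1 else 0))

/-- `f` encodes a tree of the family `G_{i,A}` for some set `A` of `k` attributes. -/
def IsATree {n m : ℕ} (i : Fin n) (k : ℕ) (f : Fin m → Fin n) : Prop :=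
  (treeSupp i f).card = k ∧ Set.InjOn f ↑(treeSupp i f)

open scoped Classical in
/-- The class `Λ_{ii}^{(0,α)}`: quadruples `(S₁,S₂,T₁,T₂)` with `S₁,S₂ ∈ G_{i,A}` and
`T₁,T₂ ∈ G_{i,B}` for some disjoint `k`-sets of attributes `A,B`, such that every edge of
the union graph lies in at least two of the four trees, it is not the case that
simultaneously `S₁ = S₂`, `T₁ = T₂` and the vertex sets of `S₁` and `T₁` meet exactly in
`{i}`, and the four user–user edge sets have exactly `α` common edges. -/
noncomputable def Lambda0 {n m : ℕ} (i : Fin n) (k α : ℕ) :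
    Finset ((Fin m → Fin n) × (Fin m → Fin n) × (Fin m → Fin n) × (Fin m → Fin n)) :=
  Finset.univ.filter (fun q => IsATree i k q.1 ∧ IsATree i k q.2.1 ∧
    IsATree i k q.2.2.1 ∧ IsATree i k q.2.2.2 ∧
    treeSupp i q.1 = treeSupp i q.2.1 ∧ treeSupp i q.2.2.1 = treeSupp i q.2.2.2 ∧
    Disjoint (treeSupp i q.1) (treeSupp i q.2.2.1) ∧
    CoveredTwice i i q.1 q.2.1 q.2.2.1 q.2.2.2 ∧
    ¬ (q.1 = q.2.1 ∧ q.2.2.1 = q.2.2.2 ∧ Disjoint (ports i q.1) (ports i q.2.2.1) ∧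
        Disjoint (treeSupp i q.1) (treeSupp i q.2.2.1)) ∧
    (userEdges i q.1 ∩ userEdges i q.2.1 ∩ userEdges i q.2.2.1 ∩
        userEdges i q.2.2.2).card = α)

section

variable {n m : ℕ} (i : Fin n)

lemma mem_treeSupp' {f : Fin m → Fin n} {a : Fin m} : a ∈ treeSupp i f ↔ f a ≠ i := by
  simp [treeSupp]

lemma line_inj : Function.Injective (fun v : Fin n => s(i, v)) := by
  intro x y h
  rcases Sym2.eq_iff.1 h with ⟨-, h2⟩ | ⟨h1, h2⟩
  · exact h2
  · rw [h2, ← h1]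

lemma userEdges_eq {f : Fin m → Fin n} :
    userEdges i f = (ports i f).image (fun v => s(i, v)) := by
  simp [userEdges, ports, Finset.image_image, Function.comp_def]

lemma card_userEdges_inter {f g : Fin m → Fin n} :
    (userEdges i f ∩ userEdges i g).card = (ports i f ∩ ports i g).card := by
  rw [userEdges_eq, userEdges_eq, ← Finset.image_inter _ _ (line_inj i),
    Finset.card_image_of_injective _ (line_inj i)]

lemma card_F (A : Finset (Fin m)) (P : Finset (Fin n)) (k : ℕ)
    [DecidablePred (fun f : Fin m → Fin n =>
      treeSupp i f = A ∧ Set.InjOn f ↑A ∧ A.image f = P)]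
    (hA : A.card = k) (hP : P.card = k) (hiP : i ∉ P) :
    (univ.filter (fun f : Fin m → Fin n =>
      treeSupp i f = A ∧ Set.InjOn f ↑A ∧ A.image f = P)).card = k.factorial := by
  have hcard : Fintype.card ↥A = Fintype.card ↥P := by
    simp [Fintype.card_coe, hA, hP]
  rw [show k.factorial = (univ : Finset (↥A ↪ ↥P)).card by
    rw [Finset.card_univ, Fintype.card_embedding_eq]
    simp [Fintype.card_coe, hA, hP, Nat.descFactorial_self]]
  apply Finset.card_bij (fun f hf => by
    rw [Finset.mem_filter] at hf
    exact (⟨fun a => ⟨f a, by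
      rw [← hf.2.2.2]; exact Finset.mem_image_of_mem f a.2⟩, by
      intro a b hab
      exact Subtype.ext (hf.2.2.1 (by exact_mod_cast a.2) (by exact_mod_cast b.2)
        (congrArg Subtype.val hab))⟩ : ↥A ↪ ↥P))
  · intro f hf; exact Finset.mem_univ _
  · intro f hf g hg hfg
    rw [Finset.mem_filter] at hf hg
    funext a
    by_cases ha : a ∈ A
    · exact congrArg Subtype.val (DFunLike.congr_fun hfg ⟨a, ha⟩)
    · have h1 : f a = i := by
        by_contra h; exact ha (hf.2.1 ▸ (mem_treeSupp' i).2 h)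
      have h2 : g a = i := by
        by_contra h; exact ha (hg.2.1 ▸ (mem_treeSupp' i).2 h)
      rw [h1, h2]
  · intro e _
    classical
    refine ⟨fun x => if h : x ∈ A then (e ⟨x, h⟩ : Fin n) else i, ?_, ?_⟩
    · rw [Finset.mem_filter]
      have hsupp : treeSupp i (fun x => if h : x ∈ A then (e ⟨x, h⟩ : Fin n) else i) = A := by
        ext a
        rw [mem_treeSupp' i]
        by_cases ha : a ∈ A
        · simp only [dif_pos ha, ha, iff_true]
          exact fun h => hiP (h ▸ (e ⟨a, ha⟩).2)
        · simp [ha]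
      have hinj : Set.InjOn (fun x => if h : x ∈ A then (e ⟨x, h⟩ : Fin n) else i) ↑A := by
        intro a ha b hb hab
        simp only [Finset.mem_coe] at ha hb
        simp only [dif_pos ha, dif_pos hb] at hab
        exact congrArg Subtype.val (e.injective (Subtype.ext hab))
      refine ⟨Finset.mem_univ _, hsupp, hinj, ?_⟩
      · -- image = P
        have hsurj : Function.Surjective e :=
          ((Fintype.bijective_iff_injective_and_card e).2 ⟨e.injective, hcard⟩).surjective
        apply Finset.Subset.antisymm
        · intro p hp
          rw [Finset.mem_image] at hp
          obtain ⟨a, ha, rfl⟩ := hp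
          simp only [dif_pos ha]
          exact (e ⟨a, ha⟩).2
        · intro p hp
          obtain ⟨⟨a, ha⟩, hea⟩ := hsurj ⟨p, hp⟩
          rw [Finset.mem_image]
          exact ⟨a, ha, by simp only [dif_pos ha, hea]⟩
    · ext a
      simp [dif_pos a.2]
end


lemma card_pairsA (m k : ℕ)
    [DecidablePred (fun p : Finset (Fin m) × Finset (Fin m) =>
      p.1.card = k ∧ p.2.card = k ∧ Disjoint p.1 p.2)] :
    ((univ : Finset (Finset (Fin m) × Finset (Fin m))).filter
      (fun p => p.1.card = k ∧ p.2.card = k ∧ Disjoint p.1 p.2)).card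
      = m.choose k * (m - k).choose k := by
  have heq : ((univ : Finset (Finset (Fin m) × Finset (Fin m))).filter
      (fun p => p.1.card = k ∧ p.2.card = k ∧ Disjoint p.1 p.2))
      = (powersetCard k (univ : Finset (Fin m))).biUnion
        (fun A => (powersetCard k Aᶜ).image (fun B => (A, B))) := by
    ext ⟨A, B⟩
    simp only [Finset.mem_filter, Finset.mem_biUnion, Finset.mem_image,
      Finset.mem_powersetCard, Finset.mem_univ, true_and, Prod.mk.injEq]
    constructor
    · rintro ⟨hA, hB, hd⟩
      exact ⟨A, ⟨Finset.subset_univ _, hA⟩, B,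
        ⟨fun b hb => Finset.mem_compl.2 (Finset.disjoint_right.1 hd hb), hB⟩, rfl, rfl⟩
    · rintro ⟨A', ⟨-, hA⟩, B', ⟨hBsub, hB⟩, rfl, rfl⟩
      refine ⟨hA, hB, Finset.disjoint_left.2 fun a ha hb => ?_⟩
      exact (Finset.mem_compl.1 (hBsub hb)) ha
  rw [heq, Finset.card_biUnion]
  · rw [Finset.sum_congr rfl (fun A hA => ?_), Finset.sum_const,
      Finset.card_powersetCard, Finset.card_univ, Fintype.card_fin, smul_eq_mul]
    rw [Finset.card_image_of_injective _ (fun B B' h => (Prod.mk.injEq _ _ _ _ ▸ h).2 ▸ rfl),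
      Finset.card_powersetCard, Finset.card_compl]
    rw [Finset.mem_powersetCard] at hA
    rw [hA.2, Fintype.card_fin]
  · intro A hA A' hA' hne
    simp only [Finset.disjoint_left, Finset.mem_image]
    rintro ⟨P, Q⟩ ⟨B, -, h1⟩ ⟨B', -, h2⟩
    exact hne ((Prod.ext_iff.1 h1).1.trans (Prod.ext_iff.1 h2).1.symm)

lemma card_pairsU {n : ℕ} (U : Finset (Fin n)) (k α : ℕ)
    [DecidablePred (fun p : Finset (Fin n) × Finset (Fin n) =>
      p.1 ⊆ U ∧ p.2 ⊆ U ∧ p.1.card = k ∧ p.2.card = k ∧ (p.1 ∩ p.2).card = α)]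
    (hαk : α ≤ k) :
    ((univ : Finset (Finset (Fin n) × Finset (Fin n))).filter
      (fun p => p.1 ⊆ U ∧ p.2 ⊆ U ∧ p.1.card = k ∧ p.2.card = k ∧ (p.1 ∩ p.2).card = α)).card
    = U.card.choose k * (k.choose α * (U.card - k).choose (k - α)) := by
  have heq : ((univ : Finset (Finset (Fin n) × Finset (Fin n))).filter
      (fun p => p.1 ⊆ U ∧ p.2 ⊆ U ∧ p.1.card = k ∧ p.2.card = k ∧ (p.1 ∩ p.2).card = α))
      = (powersetCard k U).biUnion
        (fun P => ((powersetCard α P) ×ˢ (powersetCard (k - α) (U \ P))).image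
          (fun r => (P, r.1 ∪ r.2))) := by
    ext ⟨P, Q⟩
    simp only [Finset.mem_filter, Finset.mem_biUnion, Finset.mem_image, Finset.mem_product,
      Finset.mem_powersetCard, Finset.mem_univ, true_and, Prod.mk.injEq, Prod.exists]
    constructor
    · rintro ⟨hPU, hQU, hP, hQ, hI⟩
      refine ⟨P, ⟨hPU, hP⟩, P ∩ Q, Q \ P, ⟨⟨Finset.inter_subset_left, hI⟩,
        ⟨fun x hx => Finset.mem_sdiff.2 ⟨hQU (Finset.mem_sdiff.1 hx).1, (Finset.mem_sdiff.1 hx).2⟩, ?_⟩⟩,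
        rfl, ?_⟩
      · have hc := Finset.card_inter_add_card_sdiff Q P
        rw [Finset.inter_comm] at hI
        omega
      · rw [Finset.inter_comm, Finset.union_comm, Finset.sdiff_union_inter]
    · rintro ⟨P', ⟨hPU, hP⟩, I, Q', ⟨⟨hIP, hI⟩, hQ'U, hQ'⟩, rfl, rfl⟩
      have hdis : Disjoint P' Q' := Finset.disjoint_left.2 fun x hx hx' =>
        (Finset.mem_sdiff.1 (hQ'U hx')).2 hx
      have hPI : P' ∩ (I ∪ Q') = I := by
        rw [Finset.inter_union_distrib_left,
          Finset.inter_eq_right.2 hIP, Finset.union_eq_left]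
        intro x hx
        exact absurd (Finset.mem_inter.1 hx).1 ((Finset.mem_sdiff.1 (hQ'U (Finset.mem_inter.1 hx).2)).2)
      refine ⟨hPU, ?_, hP, ?_, by rw [hPI, hI]⟩
      · exact Finset.union_subset (fun x hx => hPU (hIP hx)) (fun x hx => (Finset.mem_sdiff.1 (hQ'U hx)).1)
      · rw [Finset.card_union_of_disjoint (Finset.disjoint_of_subset_left hIP hdis), hI, hQ']
        omega
  rw [heq, Finset.card_biUnion]
  · rw [Finset.sum_congr rfl (fun P hP => ?_), Finset.sum_const,
      Finset.card_powersetCard, smul_eq_mul]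
    rw [Finset.mem_powersetCard] at hP
    rw [Finset.card_image_of_injOn, Finset.card_product, Finset.card_powersetCard,
      Finset.card_powersetCard, Finset.card_sdiff, Finset.inter_eq_left.2 hP.1, hP.2]
    · rintro ⟨I, Q'⟩ hIQ ⟨J, R'⟩ hJR h
      simp only [Finset.mem_coe, Finset.mem_product, Finset.mem_powersetCard] at hIQ hJR
      have h2 : I ∪ Q' = J ∪ R' := (Prod.ext_iff.1 h).2
      have hIJ : I = J := by
        have e1 : P ∩ (I ∪ Q') = I := by
          rw [Finset.inter_union_distrib_left, Finset.inter_eq_right.2 hIQ.1.1,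
            Finset.union_eq_left]
          intro x hx
          exact absurd (Finset.mem_inter.1 hx).1
            ((Finset.mem_sdiff.1 (hIQ.2.1 (Finset.mem_inter.1 hx).2)).2)
        have e2 : P ∩ (J ∪ R') = J := by
          rw [Finset.inter_union_distrib_left, Finset.inter_eq_right.2 hJR.1.1,
            Finset.union_eq_left]
          intro x hx
          exact absurd (Finset.mem_inter.1 hx).1
            ((Finset.mem_sdiff.1 (hJR.2.1 (Finset.mem_inter.1 hx).2)).2)
        rw [← e1, ← e2, h2]
      have hQR : Q' = R' := by
        have e1 : (I ∪ Q') \ P = Q' := by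
          rw [Finset.union_sdiff_distrib, Finset.sdiff_eq_empty_iff_subset.2 hIQ.1.1,
            Finset.empty_union, Finset.sdiff_eq_self_iff_disjoint]
          exact Finset.disjoint_left.2 fun x hx hx' =>
            (Finset.mem_sdiff.1 (hIQ.2.1 hx)).2 hx'
        have e2 : (J ∪ R') \ P = R' := by
          rw [Finset.union_sdiff_distrib, Finset.sdiff_eq_empty_iff_subset.2 hJR.1.1,
            Finset.empty_union, Finset.sdiff_eq_self_iff_disjoint]
          exact Finset.disjoint_left.2 fun x hx hx' =>
            (Finset.mem_sdiff.1 (hJR.2.1 hx)).2 hx'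
        rw [← e1, ← e2, h2]
      exact Prod.ext hIJ hQR
  · intro P hP P' hP' hne
    simp only [Finset.disjoint_left, Finset.mem_image]
    rintro x ⟨r, -, h1⟩ ⟨r', -, h2⟩
    exact hne ((Prod.ext_iff.1 (h1.trans h2.symm)).1)



open scoped Classical in
lemma attr_eq {n m : ℕ} (i : Fin n) {f1 f2 g1 g2 : Fin m → Fin n}
    (hs : treeSupp i f1 = treeSupp i f2) (hg : treeSupp i g1 = treeSupp i g2)
    (hd : Disjoint (treeSupp i f1) (treeSupp i g1))
    (hc : CoveredTwice i i f1 f2 g1 g2) : f1 = f2 ∧ g1 = g2 := by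
  constructor
  · funext a
    by_cases ha : a ∈ treeSupp i f1
    · have hp : (f1 a, a) ∈ attrEdges i f1 := Finset.mem_image_of_mem _ ha
      have h2 := hc.2 (f1 a, a) (by
        simp only [Finset.mem_union]
        exact Or.inl (Or.inl (Or.inl hp)))
      have hng1 : (f1 a, a) ∉ attrEdges i g1 := by
        intro h
        obtain ⟨b, hb, hbe⟩ := Finset.mem_image.1 h
        have hba : b = a := congrArg Prod.snd hbe
        exact (Finset.disjoint_left.1 hd ha) (hba ▸ hb)
      have hng2 : (f1 a, a) ∉ attrEdges i g2 := by
        intro h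
        obtain ⟨b, hb, hbe⟩ := Finset.mem_image.1 h
        have hba : b = a := congrArg Prod.snd hbe
        exact (Finset.disjoint_left.1 hd ha) (hg ▸ (hba ▸ hb))
      have hf2 : (f1 a, a) ∈ attrEdges i f2 := by
        by_contra h
        rw [if_pos hp, if_neg h, if_neg hng1, if_neg hng2] at h2
        omega
      obtain ⟨b, hb, hbe⟩ := Finset.mem_image.1 hf2
      have hba : b = a := congrArg Prod.snd hbe
      have := congrArg Prod.fst hbe
      simp only [hba] at this
      exact this.symm
    · have h1 : f1 a = i := by
        by_contra h; exact ha ((mem_treeSupp' i).2 h)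
      have h2 : f2 a = i := by
        by_contra h; exact ha (hs ▸ (mem_treeSupp' i).2 h)
      rw [h1, h2]
  · funext a
    by_cases ha : a ∈ treeSupp i g1
    · have hp : (g1 a, a) ∈ attrEdges i g1 := Finset.mem_image_of_mem _ ha
      have h2 := hc.2 (g1 a, a) (by
        simp only [Finset.mem_union]
        exact Or.inl (Or.inr hp))
      have hnf1 : (g1 a, a) ∉ attrEdges i f1 := by
        intro h
        obtain ⟨b, hb, hbe⟩ := Finset.mem_image.1 h
        have hba : b = a := congrArg Prod.snd hbe
        exact (Finset.disjoint_right.1 hd ha) (hba ▸ hb)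
      have hnf2 : (g1 a, a) ∉ attrEdges i f2 := by
        intro h
        obtain ⟨b, hb, hbe⟩ := Finset.mem_image.1 h
        have hba : b = a := congrArg Prod.snd hbe
        exact (Finset.disjoint_right.1 hd ha) (hs ▸ (hba ▸ hb))
      have hg2 : (g1 a, a) ∈ attrEdges i g2 := by
        by_contra h
        rw [if_pos hp, if_neg h, if_neg hnf1, if_neg hnf2] at h2
        omega
      obtain ⟨b, hb, hbe⟩ := Finset.mem_image.1 hg2
      have hba : b = a := congrArg Prod.snd hbe
      have := congrArg Prod.fst hbe
      simp only [hba] at this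
      exact this.symm
    · have h1 : g1 a = i := by
        by_contra h; exact ha ((mem_treeSupp' i).2 h)
      have h2 : g2 a = i := by
        by_contra h; exact ha (hg ▸ (mem_treeSupp' i).2 h)
      rw [h1, h2]

open scoped Classical in
lemma coveredTwice_self {n m : ℕ} (i : Fin n) (f g : Fin m → Fin n) :
    CoveredTwice i i f f g g := by
  constructor
  · intro e he
    simp only [Finset.mem_union] at he
    rcases he with ((h | h) | h) | h
    · rw [if_pos h]
      exact le_trans (Nat.le_add_right _ _) (Nat.le_add_right _ _)
    · rw [if_pos h]
      exact le_trans (Nat.le_add_right _ _) (Nat.le_add_right _ _)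
    · rw [if_pos h]
      exact Nat.le_add_left 2 _
    · rw [if_pos h]
      exact Nat.le_add_left 2 _
  · intro e he
    simp only [Finset.mem_union] at he
    rcases he with ((h | h) | h) | h
    · rw [if_pos h]
      exact le_trans (Nat.le_add_right _ _) (Nat.le_add_right _ _)
    · rw [if_pos h]
      exact le_trans (Nat.le_add_right _ _) (Nat.le_add_right _ _)
    · rw [if_pos h]
      exact Nat.le_add_left 2 _
    · rw [if_pos h]
      exact Nat.le_add_left 2 _


/-- **Cardinality of the overlap classes with disjoint attribute sets (equation (37)).**
`|Λ_{ii}^{(0,α)}| = C(m,k)·C(m−k,k)·C(n−1,α)·C(n−1−α,k−α)·C(n−1−k,k−α)·(k!)²`. -/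
theorem card_Lambda0 {n m : ℕ} (i : Fin n) (k α : ℕ) (hk : 3 ≤ k)
    (hα1 : 1 ≤ α) (hαk : α ≤ k) (hm : 2 * k ≤ m) (hn : 2 * k - α ≤ n - 1) :
    (Lambda0 (m := m) i k α).card =
      Nat.choose m k * Nat.choose (m - k) k * Nat.choose (n - 1) α *
        Nat.choose (n - 1 - α) (k - α) * Nat.choose (n - 1 - k) (k - α) *
        Nat.factorial k ^ 2 := by
  classical
  have hkn' : k ≤ n - 1 := by omega
  set U : Finset (Fin n) := Finset.univ.erase i with hUdef
  have hUcard : U.card = n - 1 := by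
    rw [hUdef, Finset.card_erase_of_mem (Finset.mem_univ i), Finset.card_univ, Fintype.card_fin]
  set X := (Finset.univ : Finset ((Fin m → Fin n) × (Fin m → Fin n))).filter
    (fun p => IsATree i k p.1 ∧ IsATree i k p.2 ∧
      Disjoint (treeSupp i p.1) (treeSupp i p.2) ∧
      (ports i p.1 ∩ ports i p.2).card = α) with hXdef
  have step1 : (Lambda0 (m := m) i k α).card = X.card := by
    apply Finset.card_nbij' (fun q => (q.1, q.2.2.1)) (fun p => (p.1, p.1, p.2, p.2))
    · intro q hq
      simp only [Lambda0, Finset.mem_coe, Finset.mem_filter, Finset.mem_univ, true_and] at hq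
      obtain ⟨h1, h2, h3, h4, h5, h6, h7, h8, h9, h10⟩ := hq
      obtain ⟨hf, hgg⟩ := attr_eq i h5 h6 h7 h8
      rw [hXdef, Finset.mem_coe, Finset.mem_filter]
      refine ⟨Finset.mem_univ _, h1, h3, h7, ?_⟩
      rw [← hf, ← hgg, Finset.inter_self, Finset.inter_assoc, Finset.inter_self,
        card_userEdges_inter] at h10
      exact h10
    · intro p hp
      rw [hXdef, Finset.mem_coe, Finset.mem_filter] at hp
      obtain ⟨-, hf, hgg, hdisj, hα⟩ := hp
      simp only [Lambda0, Finset.mem_coe, Finset.mem_filter, Finset.mem_univ, true_and]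
      refine ⟨hf, hf, hgg, hgg, hdisj, coveredTwice_self i p.1 p.2, ?_, ?_⟩
      · rintro ⟨hdp, -⟩
        rw [Finset.disjoint_iff_inter_eq_empty.1 hdp, Finset.card_empty] at hα
        omega
      · rw [Finset.inter_self, Finset.inter_assoc, Finset.inter_self,
          card_userEdges_inter]
        exact hα
    · rintro ⟨f1, f2, g1, g2⟩ hq
      simp only [Lambda0, Finset.mem_coe, Finset.mem_filter, Finset.mem_univ, true_and] at hq
      obtain ⟨h1, h2, h3, h4, h5, h6, h7, h8, h9, h10⟩ := hq
      obtain ⟨hf, hgg⟩ := attr_eq i h5 h6 h7 h8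
      simp only
      rw [hf, hgg]
    · intro p hp
      rfl
  set Oa := (Finset.univ : Finset (Finset (Fin m) × Finset (Fin m))).filter
    (fun p => p.1.card = k ∧ p.2.card = k ∧ Disjoint p.1 p.2) with hOa
  set Ou := (Finset.univ : Finset (Finset (Fin n) × Finset (Fin n))).filter
    (fun p => p.1 ⊆ U ∧ p.2 ⊆ U ∧ p.1.card = k ∧ p.2.card = k ∧ (p.1 ∩ p.2).card = α) with hOu
  set piece : (Finset (Fin m) × Finset (Fin m)) × (Finset (Fin n) × Finset (Fin n)) →
      Finset ((Fin m → Fin n) × (Fin m → Fin n)) := fun t =>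
    (Finset.univ.filter (fun f : Fin m → Fin n =>
        treeSupp i f = t.1.1 ∧ Set.InjOn f ↑t.1.1 ∧ t.1.1.image f = t.2.1)) ×ˢ
    (Finset.univ.filter (fun g : Fin m → Fin n =>
        treeSupp i g = t.1.2 ∧ Set.InjOn g ↑t.1.2 ∧ t.1.2.image g = t.2.2)) with hpiece
  have hXeq : X = (Oa ×ˢ Ou).biUnion piece := by
    ext ⟨f, g⟩
    constructor
    · intro hfg
      rw [hXdef, Finset.mem_filter] at hfg
      obtain ⟨-, ⟨hfk, hfinj⟩, ⟨hgk, hginj⟩, hdisj, hα⟩ := hfg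
      rw [Finset.mem_biUnion]
      refine ⟨((treeSupp i f, treeSupp i g), ((treeSupp i f).image f, (treeSupp i g).image g)),
        ?_, ?_⟩
      · rw [Finset.mem_product]
        constructor
        · rw [hOa, Finset.mem_filter]
          exact ⟨Finset.mem_univ _, hfk, hgk, hdisj⟩
        · rw [hOu, Finset.mem_filter]
          refine ⟨Finset.mem_univ _, ?_, ?_, ?_, ?_, hα⟩
          · intro v hv
            obtain ⟨a, ha, rfl⟩ := Finset.mem_image.1 hv
            exact Finset.mem_erase.2 ⟨(mem_treeSupp' i).1 ha, Finset.mem_univ _⟩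
          · intro v hv
            obtain ⟨a, ha, rfl⟩ := Finset.mem_image.1 hv
            exact Finset.mem_erase.2 ⟨(mem_treeSupp' i).1 ha, Finset.mem_univ _⟩
          · rw [Finset.card_image_of_injOn hfinj]; exact hfk
          · rw [Finset.card_image_of_injOn hginj]; exact hgk
      · simp only [hpiece, Finset.mem_product, Finset.mem_filter]
        exact ⟨⟨Finset.mem_univ _, trivial, hfinj, trivial⟩, ⟨Finset.mem_univ _, trivial, hginj, trivial⟩⟩
    · intro h
      rw [Finset.mem_biUnion] at h
      obtain ⟨t, ht, hfg⟩ := h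
      rw [Finset.mem_product] at ht
      obtain ⟨hta, htu⟩ := ht
      rw [hOa, Finset.mem_filter] at hta
      rw [hOu, Finset.mem_filter] at htu
      simp only [hpiece, Finset.mem_product, Finset.mem_filter] at hfg
      obtain ⟨⟨-, hfs, hfinj, hfim⟩, ⟨-, hgs, hginj, hgim⟩⟩ := hfg
      have hpf : ports i f = t.2.1 := by
        show (treeSupp i f).image f = t.2.1
        rw [hfs]; exact hfim
      have hpg : ports i g = t.2.2 := by
        show (treeSupp i g).image g = t.2.2
        rw [hgs]; exact hgim
      rw [hXdef, Finset.mem_filter]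
      refine ⟨Finset.mem_univ _, ⟨by rw [hfs]; exact hta.2.1, by rw [hfs]; exact hfinj⟩,
        ⟨by rw [hgs]; exact hta.2.2.1, by rw [hgs]; exact hginj⟩,
        by rw [hfs, hgs]; exact hta.2.2.2, ?_⟩
      rw [hpf, hpg]
      exact htu.2.2.2.2.2
  have hdisjU : ∀ t1 ∈ Oa ×ˢ Ou, ∀ t2 ∈ Oa ×ˢ Ou, t1 ≠ t2 →
      Disjoint (piece t1) (piece t2) := by
    rintro ⟨⟨A1, B1⟩, P1, Q1⟩ - ⟨⟨A2, B2⟩, P2, Q2⟩ - hne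
    rw [Finset.disjoint_left]
    rintro ⟨f, g⟩ h1 h2
    simp only [hpiece, Finset.mem_product, Finset.mem_filter] at h1 h2
    obtain ⟨⟨-, hfs1, -, hfim1⟩, ⟨-, hgs1, -, hgim1⟩⟩ := h1
    obtain ⟨⟨-, hfs2, -, hfim2⟩, ⟨-, hgs2, -, hgim2⟩⟩ := h2
    have hA : A1 = A2 := hfs1.symm.trans hfs2
    have hB : B1 = B2 := hgs1.symm.trans hgs2
    have hP : P1 = P2 := by rw [← hfim1, ← hfim2, hA]
    have hQ : Q1 = Q2 := by rw [← hgim1, ← hgim2, hB]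
    exact hne (by rw [hA, hB, hP, hQ])
  have step2 : X.card = Oa.card * Ou.card * (k.factorial * k.factorial) := by
    rw [hXeq, Finset.card_biUnion hdisjU,
      Finset.sum_congr rfl (fun t ht => ?_), Finset.sum_const, smul_eq_mul,
      Finset.card_product]
    rw [Finset.mem_product] at ht
    obtain ⟨hta, htu⟩ := ht
    rw [hOa, Finset.mem_filter] at hta
    rw [hOu, Finset.mem_filter] at htu
    have hiP : i ∉ t.2.1 := fun hi => Finset.notMem_erase i _ (htu.2.1 hi)
    have hiQ : i ∉ t.2.2 := fun hi => Finset.notMem_erase i _ (htu.2.2.1 hi)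
    simp only [hpiece]
    rw [Finset.card_product,
      card_F i t.1.1 t.2.1 k hta.2.1 htu.2.2.2.1 hiP,
      card_F i t.1.2 t.2.2 k hta.2.2.1 htu.2.2.2.2.1 hiQ]
  rw [step1, step2, hOa, card_pairsA m k, hOu, card_pairsU U k α hαk, hUcard]
  rw [show (n - 1).choose k * (k.choose α * (n - 1 - k).choose (k - α)) =
      (n - 1).choose α * ((n - 1) - α).choose (k - α) * ((n - 1) - k).choose (k - α) by
    rw [← mul_assoc, Nat.choose_mul (n := n - 1) hαk]]
  ring
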